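/- arXiv:1909.10052 — 4 statements merged into one kernel-verified Lean document; each statement's English description precedes it below -/
import Mathlib

section
/- Let f be a function on Z^{2n} (pairs (k,l) of points in Z^n) such that for every λ > 0 the cardinality of {(k,l) : |f(k,l)| > λ} is at most λ^{-4}. Then Z^{2n} can be written as the union of two disjoint sets S₁ and S₂ such that for every k ∈ Z^n, ∑_{l : (k,l)∈S₁} |f(k,l)|² ≤ C, and for every l ∈ Z^n, ∑_{k : (k,l)∈S₂} |f(k,l)|² ≤ C, where C is an absolute constant. -/
open scoped ENNReal NNReal Classical
open Finset

section aux

variable {α β : Type*}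

/-- Peeling lemma: if every subset of `E` has weight at most `c` times the number of
rows plus columns it occupies, then `E` can be 2-colored so that every row of the first
color and every column of the second color has weight at most `2c`. -/
private lemma peel_aux (w : α × β → ℝ) (hw : ∀ p, 0 ≤ w p) (c : ℝ) (hc : 0 ≤ c) :
    ∀ (N : ℕ) (E : Finset (α × β)), E.card ≤ N →
      (∀ E' ⊆ E, (∑ p ∈ E', w p) ≤
        c * (((E'.image Prod.fst).card : ℝ) + ((E'.image Prod.snd).card : ℝ))) →
      ∃ σ : α × β → Bool,
        (∀ a, ∑ p ∈ E.filter (fun p => p.1 = a ∧ σ p = true), w p ≤ 2 * c) ∧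
        (∀ b, ∑ p ∈ E.filter (fun p => p.2 = b ∧ σ p = false), w p ≤ 2 * c) := by
  intro N
  induction N with
  | zero =>
    intro E hE _
    have hE0 : E = ∅ := card_eq_zero.1 (Nat.le_zero.1 hE)
    subst hE0
    exact ⟨fun _ => true, by simp; intros; linarith, by simp; intros; linarith⟩
  | succ N ih =>
    intro E hE hd
    rcases E.eq_empty_or_nonempty with rfl | hne
    · exact ⟨fun _ => true, by simp; intros; linarith, by simp; intros; linarith⟩
    · -- pigeonhole: some row or column has weight ≤ 2c
      have key : (∃ a ∈ E.image Prod.fst, ∑ p ∈ E.filter (fun p => p.1 = a), w p ≤ 2 * c) ∨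
          (∃ b ∈ E.image Prod.snd, ∑ p ∈ E.filter (fun p => p.2 = b), w p ≤ 2 * c) := by
        by_contra h
        push_neg at h
        obtain ⟨h1, h2⟩ := h
        have hrw : ∑ a ∈ E.image Prod.fst, ∑ p ∈ E.filter (fun p => p.1 = a), w p
            = ∑ p ∈ E, w p :=
          Finset.sum_fiberwise_of_maps_to (fun p hp => mem_image_of_mem _ hp) w
        have hcw : ∑ b ∈ E.image Prod.snd, ∑ p ∈ E.filter (fun p => p.2 = b), w p
            = ∑ p ∈ E, w p :=
          Finset.sum_fiberwise_of_maps_to (fun p hp => mem_image_of_mem _ hp) w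
        have hrne : (E.image Prod.fst).Nonempty := hne.image _
        have hcne : (E.image Prod.snd).Nonempty := hne.image _
        have hR : ∑ a ∈ E.image Prod.fst, (2 * c)
            < ∑ a ∈ E.image Prod.fst, ∑ p ∈ E.filter (fun p => p.1 = a), w p :=
          Finset.sum_lt_sum_of_nonempty hrne h1
        have hQ : ∑ b ∈ E.image Prod.snd, (2 * c)
            < ∑ b ∈ E.image Prod.snd, ∑ p ∈ E.filter (fun p => p.2 = b), w p :=
          Finset.sum_lt_sum_of_nonempty hcne h2
        rw [Finset.sum_const, nsmul_eq_mul] at hR hQ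
        have hdE := hd E le_rfl
        rw [hrw] at hR
        rw [hcw] at hQ
        linarith
      rcases key with ⟨a, ha, hasum⟩ | ⟨b, hb, hbsum⟩
      · -- remove row a, color it true
        obtain ⟨p₀, hp₀E, hp₀a⟩ := mem_image.1 ha
        set E' := E.filter (fun p => ¬ p.1 = a) with hE'
        have hlt : E'.card < E.card :=
          card_lt_card (filter_ssubset.2 ⟨p₀, hp₀E, by simp [hp₀a]⟩)
        obtain ⟨σ', hσ1, hσ2⟩ := ih E' (by omega)
          (fun E'' h'' => hd E'' (h''.trans (filter_subset _ _)))
        refine ⟨fun p => if p.1 = a then true else σ' p, ?_, ?_⟩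
        · intro a'
          by_cases haa : a' = a
          · subst haa
            refine le_trans (Finset.sum_le_sum_of_subset_of_nonneg ?_
              (fun p _ _ => hw p)) hasum
            intro p hp
            rw [mem_filter] at hp ⊢
            exact ⟨hp.1, hp.2.1⟩
          · have heq : E.filter (fun p => p.1 = a' ∧ (if p.1 = a then true else σ' p) = true)
                = E'.filter (fun p => p.1 = a' ∧ σ' p = true) := by
              ext p
              simp only [hE', mem_filter, and_assoc]
              constructor
              · rintro ⟨hpE, hpa', hσ⟩
                have hpa : ¬ p.1 = a := by rw [hpa']; exact haa
                rw [if_neg hpa] at hσ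
                exact ⟨hpE, hpa, hpa', hσ⟩
              · rintro ⟨hpE, hpa, hpa', hσ⟩
                exact ⟨hpE, hpa', by rw [if_neg hpa]; exact hσ⟩
            rw [heq]
            exact hσ1 a'
        · intro b
          have heq : E.filter (fun p => p.2 = b ∧ (if p.1 = a then true else σ' p) = false)
              = E'.filter (fun p => p.2 = b ∧ σ' p = false) := by
            ext p
            simp only [hE', mem_filter, and_assoc]
            constructor
            · rintro ⟨hpE, hpb, hσ⟩
              by_cases hpa : p.1 = a
              · rw [if_pos hpa] at hσ; exact absurd hσ (by simp)
              · rw [if_neg hpa] at hσ; exact ⟨hpE, hpa, hpb, hσ⟩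
            · rintro ⟨hpE, hpa, hpb, hσ⟩
              exact ⟨hpE, hpb, by rw [if_neg hpa]; exact hσ⟩
          rw [heq]
          exact hσ2 b
      · -- remove column b, color it false
        obtain ⟨p₀, hp₀E, hp₀b⟩ := mem_image.1 hb
        set E' := E.filter (fun p => ¬ p.2 = b) with hE'
        have hlt : E'.card < E.card :=
          card_lt_card (filter_ssubset.2 ⟨p₀, hp₀E, by simp [hp₀b]⟩)
        obtain ⟨σ', hσ1, hσ2⟩ := ih E' (by omega)
          (fun E'' h'' => hd E'' (h''.trans (filter_subset _ _)))
        refine ⟨fun p => if p.2 = b then false else σ' p, ?_, ?_⟩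
        · intro a
          have heq : E.filter (fun p => p.1 = a ∧ (if p.2 = b then false else σ' p) = true)
              = E'.filter (fun p => p.1 = a ∧ σ' p = true) := by
            ext p
            simp only [hE', mem_filter, and_assoc]
            constructor
            · rintro ⟨hpE, hpa, hσ⟩
              by_cases hpb : p.2 = b
              · rw [if_pos hpb] at hσ; exact absurd hσ (by simp)
              · rw [if_neg hpb] at hσ; exact ⟨hpE, hpb, hpa, hσ⟩
            · rintro ⟨hpE, hpb, hpa, hσ⟩
              exact ⟨hpE, hpa, by rw [if_neg hpb]; exact hσ⟩
          rw [heq]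
          exact hσ1 a
        · intro b'
          by_cases hbb : b' = b
          · subst hbb
            refine le_trans (Finset.sum_le_sum_of_subset_of_nonneg ?_
              (fun p _ _ => hw p)) hbsum
            intro p hp
            rw [mem_filter] at hp ⊢
            exact ⟨hp.1, hp.2.1⟩
          · have heq : E.filter (fun p => p.2 = b' ∧ (if p.2 = b then false else σ' p) = false)
                = E'.filter (fun p => p.2 = b' ∧ σ' p = false) := by
              ext p
              simp only [hE', mem_filter, and_assoc]
              constructor
              · rintro ⟨hpE, hpb', hσ⟩
                have hpb : ¬ p.2 = b := by rw [hpb']; exact hbb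
                rw [if_neg hpb] at hσ
                exact ⟨hpE, hpb, hpb', hσ⟩
              · rintro ⟨hpE, hpb, hpb', hσ⟩
                exact ⟨hpE, hpb', by rw [if_neg hpb]; exact hσ⟩
            rw [heq]
            exact hσ2 b'

/-- Weak-ℓ⁴ bound implies that finite pieces of the support have ℓ² mass at most `8√N`. -/
private lemma density_sqrt (f : α × β → ℂ)
    (hf : ∀ lam : ℝ, 0 < lam →
      {p : α × β | lam < ‖f p‖}.Finite ∧
      (({p : α × β | lam < ‖f p‖}.ncard : ℝ) ≤ lam ^ (-4 : ℤ))) :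
    ∀ (N : ℕ) (E : Finset (α × β)), E.card ≤ N → (∀ p ∈ E, f p ≠ 0) →
      ∑ p ∈ E, ‖f p‖ ^ 2 ≤ 8 * Real.sqrt E.card := by
  intro N
  induction N with
  | zero =>
    intro E hE _
    have hE0 : E = ∅ := card_eq_zero.1 (Nat.le_zero.1 hE)
    subst hE0
    simp
  | succ N ih =>
    intro E hE hsupp
    rcases E.eq_empty_or_nonempty with rfl | hne
    · simp
    · obtain ⟨p₀, hp₀E, hp₀min⟩ := E.exists_min_image (fun p => ‖f p‖) hne
      set μ := ‖f p₀‖ with hμdef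
      have hμpos : 0 < μ := norm_pos_iff.2 (hsupp p₀ hp₀E)
      have hhalf : 0 < μ / 2 := by linarith
      obtain ⟨hfin, hcard⟩ := hf (μ / 2) hhalf
      -- E ⊆ the superlevel set at μ/2
      have hsub : (E : Set (α × β)) ⊆ {p : α × β | μ / 2 < ‖f p‖} := by
        intro p hp
        have := hp₀min p hp
        simp only [Set.mem_setOf_eq]
        linarith
      have hcard2 : (E.card : ℝ) ≤ ({p : α × β | μ / 2 < ‖f p‖}.ncard : ℝ) := by
        exact_mod_cast Nat.cast_le.2 (by
          simpa [Set.ncard_coe_finset] using Set.ncard_le_ncard hsub hfin :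
            E.card ≤ {p : α × β | μ / 2 < ‖f p‖}.ncard)
      have hzpow : (μ / 2 : ℝ) ^ (-4 : ℤ) = ((μ / 2) ^ (4 : ℕ))⁻¹ := by
        rw [show (-4 : ℤ) = -(4 : ℕ) by norm_num, zpow_neg, zpow_natCast]
      have hNle : (E.card : ℝ) * (μ / 2) ^ (4 : ℕ) ≤ 1 := by
        have h1 := hcard2.trans hcard
        rw [hzpow] at h1
        have h2 : (0 : ℝ) < (μ / 2) ^ (4 : ℕ) := by positivity
        calc (E.card : ℝ) * (μ / 2) ^ (4 : ℕ)
            ≤ ((μ / 2) ^ (4 : ℕ))⁻¹ * (μ / 2) ^ (4 : ℕ) := by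
              exact mul_le_mul_of_nonneg_right h1 (le_of_lt h2)
          _ = 1 := inv_mul_cancel₀ (ne_of_gt h2)
      have hμ4 : μ ^ 4 * E.card ≤ 16 := by nlinarith [hμpos.le]
      set n := E.card with hn
      have hn1 : 1 ≤ n := Nat.one_le_iff_ne_zero.2 (card_ne_zero_of_mem hp₀E)
      set s : ℝ := Real.sqrt n with hs
      set t : ℝ := Real.sqrt (n - 1 : ℕ) with ht
      have hss : s * s = (n : ℝ) := Real.mul_self_sqrt (Nat.cast_nonneg _)
      have htt : t * t = ((n - 1 : ℕ) : ℝ) := Real.mul_self_sqrt (Nat.cast_nonneg _)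
      have hcast : ((n - 1 : ℕ) : ℝ) = (n : ℝ) - 1 := by
        rw [Nat.cast_sub hn1]; norm_num
      have hspos : 0 < s := Real.sqrt_pos.2 (by exact_mod_cast Nat.lt_of_lt_of_le Nat.zero_lt_one hn1)
      have htnn : 0 ≤ t := Real.sqrt_nonneg _
      -- μ² ≤ 4/√n, in the form μ²·s ≤ 4
      have hμs : μ ^ 2 * s ≤ 4 := by nlinarith [sq_nonneg (μ ^ 2 * s - 4), hμpos.le, hspos.le]
      -- induction on the erased set
      have hIH : ∑ p ∈ E.erase p₀, ‖f p‖ ^ 2 ≤ 8 * t := by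
        have hcarde : (E.erase p₀).card = n - 1 := by rw [card_erase_of_mem hp₀E]
        have := ih (E.erase p₀) (by omega)
          (fun p hp => hsupp p (mem_of_mem_erase hp))
        rwa [hcarde] at this
      have hsplit : ∑ p ∈ E.erase p₀, ‖f p‖ ^ 2 + ‖f p₀‖ ^ 2 = ∑ p ∈ E, ‖f p‖ ^ 2 :=
        Finset.sum_erase_add E _ hp₀E
      -- arithmetic: 8t + μ² ≤ 8s
      have hst : 2 * (t * s) ≤ ((n : ℝ) - 1) + n := by
        nlinarith [sq_nonneg (t - s), hcast]
      have harith : 8 * t + μ ^ 2 ≤ 8 * s := by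
        have h3 : μ ^ 2 * s ≤ (8 * s - 8 * t) * s := by nlinarith
        have h4 : μ ^ 2 ≤ 8 * s - 8 * t := by
          have := (mul_le_mul_iff_of_pos_right hspos).1 h3
          linarith
        linarith
      calc ∑ p ∈ E, ‖f p‖ ^ 2 = ∑ p ∈ E.erase p₀, ‖f p‖ ^ 2 + μ ^ 2 := by
            rw [hsplit]
        _ ≤ 8 * t + μ ^ 2 := by linarith
        _ ≤ 8 * s := harith

/-- Density lemma: finite pieces of the support have ℓ² mass at most 4·(#rows + #cols). -/
private lemma density (f : α × β → ℂ)
    (hf : ∀ lam : ℝ, 0 < lam →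
      {p : α × β | lam < ‖f p‖}.Finite ∧
      (({p : α × β | lam < ‖f p‖}.ncard : ℝ) ≤ lam ^ (-4 : ℤ)))
    (E : Finset (α × β)) (hsupp : ∀ p ∈ E, f p ≠ 0) :
    ∑ p ∈ E, ‖f p‖ ^ 2 ≤
      4 * (((E.image Prod.fst).card : ℝ) + ((E.image Prod.snd).card : ℝ)) := by
  have h1 := density_sqrt f hf E.card E le_rfl hsupp
  set R := (E.image Prod.fst).card with hR
  set Q := (E.image Prod.snd).card with hQ
  have hEsub : E ⊆ (E.image Prod.fst) ×ˢ (E.image Prod.snd) := by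
    intro p hp
    exact Finset.mem_product.2 ⟨mem_image_of_mem _ hp, mem_image_of_mem _ hp⟩
  have hcard : E.card ≤ R * Q := by
    simpa [Finset.card_product] using Finset.card_le_card hEsub
  have h2 : Real.sqrt E.card ≤ Real.sqrt (R * Q : ℕ) :=
    Real.sqrt_le_sqrt (by exact_mod_cast hcard)
  have h3 : Real.sqrt ((R : ℝ) * Q) = Real.sqrt R * Real.sqrt Q :=
    Real.sqrt_mul (Nat.cast_nonneg _) _
  have hr := Real.sq_sqrt (Nat.cast_nonneg R : (0:ℝ) ≤ R)
  have hq := Real.sq_sqrt (Nat.cast_nonneg Q : (0:ℝ) ≤ Q)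
  have h4 : 2 * (Real.sqrt R * Real.sqrt Q) ≤ (R : ℝ) + Q := by
    nlinarith [sq_nonneg (Real.sqrt R - Real.sqrt Q)]
  have h5 : Real.sqrt (R * Q : ℕ) = Real.sqrt R * Real.sqrt Q := by
    rw [← h3]; norm_num
  linarith [h1.trans (by linarith [h2, h5.symm ▸ h2] : 8 * Real.sqrt E.card ≤ 8 * (Real.sqrt R * Real.sqrt Q))]


/-- Reduce a tsum bound to a bound on finite sets of support points. -/
private lemma tsum_ite_le {γ : Type*} (P : γ → Prop) (g : γ → ℂ) (c : ℝ≥0)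
    (h : ∀ F : Finset γ, (∀ x ∈ F, P x ∧ g x ≠ 0) → ∑ x ∈ F, (‖g x‖₊ ^ 2 : ℝ≥0) ≤ c) :
    ∑' x, (if P x then (‖g x‖₊ ^ 2 : ℝ≥0∞) else 0) ≤ (c : ℝ≥0∞) := by
  rw [ENNReal.tsum_eq_iSup_sum]
  refine iSup_le fun F => ?_
  have step1 : ∀ x ∈ F, (if P x then (‖g x‖₊ ^ 2 : ℝ≥0∞) else 0)
      ≤ ((if P x ∧ g x ≠ 0 then ‖g x‖₊ ^ 2 else 0 : ℝ≥0) : ℝ≥0∞) := by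
    intro x _
    by_cases h1 : P x <;> by_cases h2 : g x = 0 <;> simp [h1, h2]
  refine le_trans (Finset.sum_le_sum step1) ?_
  rw [← ENNReal.coe_finset_sum]
  refine ENNReal.coe_le_coe.2 ?_
  refine le_trans (le_of_eq (Finset.sum_filter _ _).symm) ?_
  exact h _ (fun x hx => (Finset.mem_filter.1 hx).2)

end aux

/-- weak-ℓ⁴ decomposition lemma on `ℤⁿ × ℤⁿ`. -/
theorem stmt_0 :
    ∃ C : ℝ≥0, ∀ (n : ℕ) (f : (Fin n → ℤ) × (Fin n → ℤ) → ℂ),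
      (∀ lam : ℝ, 0 < lam →
        {p : (Fin n → ℤ) × (Fin n → ℤ) | lam < ‖f p‖}.Finite ∧
        (({p : (Fin n → ℤ) × (Fin n → ℤ) | lam < ‖f p‖}.ncard : ℝ) ≤ lam ^ (-4 : ℤ))) →
      ∃ S₁ S₂ : Set ((Fin n → ℤ) × (Fin n → ℤ)),
        Disjoint S₁ S₂ ∧ S₁ ∪ S₂ = Set.univ ∧
        (∀ k : Fin n → ℤ,
          ∑' l : Fin n → ℤ, (if (k, l) ∈ S₁ then (‖f (k, l)‖₊ ^ 2 : ℝ≥0∞) else 0) ≤ C) ∧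
        (∀ l : Fin n → ℤ,
          ∑' k : Fin n → ℤ, (if (k, l) ∈ S₂ then (‖f (k, l)‖₊ ^ 2 : ℝ≥0∞) else 0) ≤ C) := by
  refine ⟨8, fun n f hf => ?_⟩
  -- finite truncations of the support
  have hpos : ∀ m : ℕ, (0 : ℝ) < 1 / (m + 1) := fun m => by positivity
  set Efin : ℕ → Finset ((Fin n → ℤ) × (Fin n → ℤ)) :=
    fun m => (hf (1 / (m + 1)) (hpos m)).1.toFinset with hEfin
  have hmemE : ∀ m (p : (Fin n → ℤ) × (Fin n → ℤ)),
      p ∈ Efin m ↔ 1 / ((m : ℝ) + 1) < ‖f p‖ := by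
    intro m p
    simp [hEfin, Set.Finite.mem_toFinset]
  have hsuppE : ∀ m (p : (Fin n → ℤ) × (Fin n → ℤ)), p ∈ Efin m → f p ≠ 0 := by
    intro m p hp
    have h1 := (hmemE m p).1 hp
    have h2 : 0 < ‖f p‖ := lt_trans (hpos m) h1
    exact norm_pos_iff.1 h2
  -- apply the peeling lemma to each truncation
  choose σs hσ1 hσ2 using fun m : ℕ =>
    peel_aux (fun p => ‖f p‖ ^ 2) (fun p => sq_nonneg _) 4 (by norm_num)
      (Efin m).card (Efin m) le_rfl
      (fun E' hE' => density f hf E' (fun p hp => hsuppE m p (hE' hp)))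
  -- ultrafilter limit
  set U : Ultrafilter ℕ := Ultrafilter.of Filter.atTop with hU
  have hUatTop : (↑U : Filter ℕ) ≤ Filter.atTop := Ultrafilter.of_le _
  have hEm : ∀ p : (Fin n → ℤ) × (Fin n → ℤ), f p ≠ 0 →
      {m | p ∈ Efin m} ∈ (U : Filter ℕ) := by
    intro p hp
    have hfpos : 0 < ‖f p‖ := norm_pos_iff.2 hp
    obtain ⟨m₀, hm₀⟩ := exists_nat_one_div_lt hfpos
    refine Filter.mem_of_superset (Filter.le_def.1 hUatTop _ (Filter.mem_atTop m₀)) ?_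
    intro m hm
    simp only [Set.mem_setOf_eq]
    rw [hmemE]
    refine lt_of_le_of_lt ?_ hm₀
    have h1 : ((m₀ : ℝ) + 1) ≤ (m : ℝ) + 1 := by
      have := (Nat.cast_le (α := ℝ)).2 (hm : m₀ ≤ m)
      linarith
    exact one_div_le_one_div_of_le (by positivity) h1
  set S₁ : Set ((Fin n → ℤ) × (Fin n → ℤ)) := {p | {m | σs m p = true} ∈ U} with hS₁
  refine ⟨S₁, S₁ᶜ, disjoint_compl_right, Set.union_compl_self _, ?_, ?_⟩
  · -- row sums
    intro k
    refine tsum_ite_le _ _ _ (fun F hF => ?_)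
    rw [← NNReal.coe_le_coe]
    push_cast
    -- find a common stage m for all points of F
    have hBl : ∀ l ∈ F, {m | σs m (k, l) = true ∧ (k, l) ∈ Efin m} ∈ (U : Filter ℕ) := by
      intro l hl
      have hA : {m | σs m (k, l) = true} ∈ (U : Filter ℕ) := (hF l hl).1
      have hB := hEm (k, l) (hF l hl).2
      exact Filter.mem_of_superset (Filter.inter_mem hA hB) (fun m hm => ⟨hm.1, hm.2⟩)
    have hT : (⋂ l ∈ F, {m | σs m (k, l) = true ∧ (k, l) ∈ Efin m}) ∈ (U : Filter ℕ) :=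
      (Filter.biInter_finset_mem F).2 hBl
    obtain ⟨m, hm⟩ := Filter.nonempty_of_mem hT
    have hmall : ∀ l ∈ F, σs m (k, l) = true ∧ (k, l) ∈ Efin m :=
      fun l hl => Set.mem_iInter₂.1 hm l hl
    have hinj : ∀ x ∈ F, ∀ y ∈ F,
        (fun l => ((k, l) : (Fin n → ℤ) × (Fin n → ℤ))) x
          = (fun l => ((k, l) : (Fin n → ℤ) × (Fin n → ℤ))) y → x = y := by
      intro x _ y _ hxy
      simpa using hxy
    calc ∑ l ∈ F, ‖f (k, l)‖ ^ 2
        = ∑ p ∈ F.image (fun l => ((k, l) : (Fin n → ℤ) × (Fin n → ℤ))), ‖f p‖ ^ 2 := by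
          rw [Finset.sum_image hinj]
      _ ≤ 2 * 4 := by
          refine le_trans (Finset.sum_le_sum_of_subset_of_nonneg ?_
            (fun p _ _ => sq_nonneg _)) (hσ1 m k)
          intro p hp
          obtain ⟨l, hl, rfl⟩ := Finset.mem_image.1 hp
          simp only [Finset.mem_filter]
          exact ⟨(hmall l hl).2, trivial, (hmall l hl).1⟩
      _ = 8 := by norm_num
  · -- column sums
    intro l
    refine tsum_ite_le _ _ _ (fun F hF => ?_)
    rw [← NNReal.coe_le_coe]
    push_cast
    have hBl : ∀ k ∈ F, {m | σs m (k, l) = false ∧ (k, l) ∈ Efin m} ∈ (U : Filter ℕ) := by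
      intro k hk
      have hnot : {m | σs m (k, l) = true} ∉ (U : Filter ℕ) := (hF k hk).1
      have hA : {m | σs m (k, l) = true}ᶜ ∈ (U : Filter ℕ) :=
        (Ultrafilter.compl_mem_iff_notMem).2 hnot
      have hA' : {m | σs m (k, l) = false} ∈ (U : Filter ℕ) := by
        refine Filter.mem_of_superset hA ?_
        intro m hm
        simp only [Set.mem_compl_iff, Set.mem_setOf_eq] at hm ⊢
        simpa using hm
      have hB := hEm (k, l) (hF k hk).2
      exact Filter.mem_of_superset (Filter.inter_mem hA' hB) (fun m hm => ⟨hm.1, hm.2⟩)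
    have hT : (⋂ k ∈ F, {m | σs m (k, l) = false ∧ (k, l) ∈ Efin m}) ∈ (U : Filter ℕ) :=
      (Filter.biInter_finset_mem F).2 hBl
    obtain ⟨m, hm⟩ := Filter.nonempty_of_mem hT
    have hmall : ∀ k ∈ F, σs m (k, l) = false ∧ (k, l) ∈ Efin m :=
      fun k hk => Set.mem_iInter₂.1 hm k hk
    have hinj : ∀ x ∈ F, ∀ y ∈ F,
        (fun k => ((k, l) : (Fin n → ℤ) × (Fin n → ℤ))) x
          = (fun k => ((k, l) : (Fin n → ℤ) × (Fin n → ℤ))) y → x = y := by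
      intro x _ y _ hxy
      simpa using hxy
    calc ∑ k ∈ F, ‖f (k, l)‖ ^ 2
        = ∑ p ∈ F.image (fun k => ((k, l) : (Fin n → ℤ) × (Fin n → ℤ))), ‖f p‖ ^ 2 := by
          rw [Finset.sum_image hinj]
      _ ≤ 2 * 4 := by
          refine le_trans (Finset.sum_le_sum_of_subset_of_nonneg ?_
            (fun p _ _ => sq_nonneg _)) (hσ2 m l)
          intro p hp
          obtain ⟨k, hk, rfl⟩ := Finset.mem_image.1 hp
          simp only [Finset.mem_filter]
          exact ⟨(hmall k hk).2, trivial, (hmall k hk).1⟩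
      _ = 8 := by norm_num
end

section
/- Suppose f : Z² → ℂ satisfies the monotonicity condition |f(k₁,l₁)| ≤ |f(k₂,l₂)| whenever max{|k₁|,|l₁|} > max{|k₂|,|l₂|}. Suppose Z² = S₁ ∪ S₂ with S₁, S₂ disjoint, and there is a constant C with ∑_{l : (k,l)∈S₁} |f(k,l)|² ≤ C for every k ∈ Z and ∑_{k : (k,l)∈S₂} |f(k,l)|² ≤ C for every l ∈ Z. Then f ∈ ℓ^{4,∞}(Z²), i.e., sup_{λ>0} λ · card{(k,l) : |f(k,l)| > λ}^{1/4} < ∞. -/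
open scoped ENNReal NNReal Classical

private lemma key_lemma (f : ℤ × ℤ → ℂ) (S₁ S₂ : Set (ℤ × ℤ)) (hdisj : Disjoint S₁ S₂)
    (hunion : S₁ ∪ S₂ = Set.univ) (C : ℝ≥0)
    (h₁ : ∀ k : ℤ, ∑' l : ℤ, (if (k, l) ∈ S₁ then (‖f (k, l)‖₊ ^ 2 : ℝ≥0∞) else 0) ≤ C)
    (h₂ : ∀ l : ℤ, ∑' k : ℤ, (if (k, l) ∈ S₂ then (‖f (k, l)‖₊ ^ 2 : ℝ≥0∞) else 0) ≤ C)
    (lam : ℝ) (hlam : 0 < lam) (m : ℕ)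
    (hE : ∀ k l : ℤ, max |k| |l| ≤ (m : ℤ) → lam < ‖f (k, l)‖) :
    lam ^ 2 * (2 * (m : ℝ) + 1) ≤ 2 * (C : ℝ) := by
  classical
  set I : Finset ℤ := Finset.Icc (-(m : ℤ)) m with hIdef
  have hIcard : I.card = 2 * m + 1 := by
    rw [hIdef, Int.card_Icc]; omega
  have hmem : ∀ p ∈ I ×ˢ I, lam < ‖f p‖ := by
    rintro ⟨k, l⟩ hp
    rw [Finset.mem_product, hIdef, Finset.mem_Icc, Finset.mem_Icc] at hp
    exact hE k l (max_le (abs_le.2 ⟨hp.1.1, hp.1.2⟩) (abs_le.2 ⟨hp.2.1, hp.2.2⟩))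
  -- lower bound for the sum over the square
  have hlow : ((Real.toNNReal lam : ℝ≥0∞) ^ 2) * ((2 * m + 1 : ℕ) ^ 2 : ℕ) ≤
      ∑ p ∈ I ×ˢ I, (‖f p‖₊ ^ 2 : ℝ≥0∞) := by
    have : ∀ p ∈ I ×ˢ I, ((Real.toNNReal lam : ℝ≥0∞) ^ 2) ≤ (‖f p‖₊ ^ 2 : ℝ≥0∞) := by
      intro p hp
      have h1 : Real.toNNReal lam ≤ ‖f p‖₊ := by
        apply Real.toNNReal_le_iff_le_coe.mpr
        simpa using (hmem p hp).le
      exact_mod_cast pow_le_pow_left₀ (zero_le (a := Real.toNNReal lam)) h1 2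
    calc ((Real.toNNReal lam : ℝ≥0∞) ^ 2) * ((2 * m + 1 : ℕ) ^ 2 : ℕ)
        = (I ×ˢ I).card • ((Real.toNNReal lam : ℝ≥0∞) ^ 2) := by
          rw [Finset.card_product, hIcard, nsmul_eq_mul, mul_comm]; push_cast; ring
      _ ≤ ∑ p ∈ I ×ˢ I, (‖f p‖₊ ^ 2 : ℝ≥0∞) := Finset.card_nsmul_le_sum _ _ _ this
  -- split according to S₁ and S₂
  have hsplit : ∑ p ∈ I ×ˢ I, (‖f p‖₊ ^ 2 : ℝ≥0∞) =
      (∑ p ∈ I ×ˢ I, if p ∈ S₁ then (‖f p‖₊ ^ 2 : ℝ≥0∞) else 0) +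
      (∑ p ∈ I ×ˢ I, if p ∈ S₂ then (‖f p‖₊ ^ 2 : ℝ≥0∞) else 0) := by
    rw [← Finset.sum_add_distrib]
    refine Finset.sum_congr rfl fun p _ => ?_
    have hp : p ∈ S₁ ∨ p ∈ S₂ := by
      have := Set.mem_univ p; rw [← hunion] at this; exact this
    by_cases h1 : p ∈ S₁
    · have h2 : p ∉ S₂ := fun h => Set.disjoint_left.mp hdisj h1 h
      simp [h1, h2]
    · have h2 : p ∈ S₂ := hp.resolve_left h1
      simp [h1, h2]
  have hup1 : (∑ p ∈ I ×ˢ I, if p ∈ S₁ then (‖f p‖₊ ^ 2 : ℝ≥0∞) else 0) ≤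
      ((2 * m + 1 : ℕ) : ℝ≥0∞) * C := by
    rw [Finset.sum_product]
    calc ∑ k ∈ I, ∑ l ∈ I, (if (k, l) ∈ S₁ then (‖f (k, l)‖₊ ^ 2 : ℝ≥0∞) else 0)
        ≤ ∑ k ∈ I, ∑' l : ℤ, (if (k, l) ∈ S₁ then (‖f (k, l)‖₊ ^ 2 : ℝ≥0∞) else 0) :=
          Finset.sum_le_sum fun k _ => ENNReal.sum_le_tsum I
      _ ≤ ∑ k ∈ I, (C : ℝ≥0∞) := Finset.sum_le_sum fun k _ => h₁ k
      _ = ((2 * m + 1 : ℕ) : ℝ≥0∞) * C := by rw [Finset.sum_const, hIcard, nsmul_eq_mul]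
  have hup2 : (∑ p ∈ I ×ˢ I, if p ∈ S₂ then (‖f p‖₊ ^ 2 : ℝ≥0∞) else 0) ≤
      ((2 * m + 1 : ℕ) : ℝ≥0∞) * C := by
    rw [Finset.sum_product_right]
    calc ∑ l ∈ I, ∑ k ∈ I, (if (k, l) ∈ S₂ then (‖f (k, l)‖₊ ^ 2 : ℝ≥0∞) else 0)
        ≤ ∑ l ∈ I, ∑' k : ℤ, (if (k, l) ∈ S₂ then (‖f (k, l)‖₊ ^ 2 : ℝ≥0∞) else 0) :=
          Finset.sum_le_sum fun l _ => ENNReal.sum_le_tsum I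
      _ ≤ ∑ l ∈ I, (C : ℝ≥0∞) := Finset.sum_le_sum fun l _ => h₂ l
      _ = ((2 * m + 1 : ℕ) : ℝ≥0∞) * C := by rw [Finset.sum_const, hIcard, nsmul_eq_mul]
  have hmain : ((Real.toNNReal lam : ℝ≥0∞) ^ 2) * ((2 * m + 1 : ℕ) : ℝ≥0∞) ≤ 2 * C := by
    have h : (((Real.toNNReal lam : ℝ≥0∞) ^ 2) * ((2 * m + 1 : ℕ) : ℝ≥0∞)) *
        ((2 * m + 1 : ℕ) : ℝ≥0∞) ≤ (2 * C) * ((2 * m + 1 : ℕ) : ℝ≥0∞) := by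
      calc (((Real.toNNReal lam : ℝ≥0∞) ^ 2) * ((2 * m + 1 : ℕ) : ℝ≥0∞)) *
          ((2 * m + 1 : ℕ) : ℝ≥0∞)
          = ((Real.toNNReal lam : ℝ≥0∞) ^ 2) * ((2 * m + 1 : ℕ) ^ 2 : ℕ) := by
            push_cast; ring
        _ ≤ ∑ p ∈ I ×ˢ I, (‖f p‖₊ ^ 2 : ℝ≥0∞) := hlow
        _ ≤ ((2 * m + 1 : ℕ) : ℝ≥0∞) * C + ((2 * m + 1 : ℕ) : ℝ≥0∞) * C := by
            rw [hsplit]; exact add_le_add hup1 hup2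
        _ = (2 * C) * ((2 * m + 1 : ℕ) : ℝ≥0∞) := by ring
    refine (ENNReal.mul_le_mul_iff_left ?_ ?_).mp h
    · exact_mod_cast Nat.succ_ne_zero (2 * m)
    · exact ENNReal.natCast_ne_top _
  -- convert to ℝ
  have htop : (2 * (C : ℝ≥0∞)) ≠ ⊤ := by finiteness
  have := ENNReal.toReal_mono htop hmain
  rw [ENNReal.toReal_mul, ENNReal.toReal_mul, ENNReal.toReal_pow] at this
  simp only [ENNReal.coe_toReal, Real.coe_toNNReal _ hlam.le, ENNReal.toReal_natCast,
    ENNReal.toReal_ofNat] at this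
  calc lam ^ 2 * (2 * (m : ℝ) + 1) = lam ^ 2 * ((2 * m + 1 : ℕ) : ℝ) := by push_cast; ring
    _ ≤ 2 * (C : ℝ) := this

/-- converse of the decomposition lemma for functions on `ℤ²` that are radially
decreasing with respect to the maximum norm. -/
theorem stmt_3 (f : ℤ × ℤ → ℂ)
    (hmono : ∀ k₁ l₁ k₂ l₂ : ℤ, max |k₁| |l₁| > max |k₂| |l₂| → ‖f (k₁, l₁)‖ ≤ ‖f (k₂, l₂)‖)
    (S₁ S₂ : Set (ℤ × ℤ)) (hdisj : Disjoint S₁ S₂) (hunion : S₁ ∪ S₂ = Set.univ)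
    (C : ℝ≥0)
    (h₁ : ∀ k : ℤ, ∑' l : ℤ, (if (k, l) ∈ S₁ then (‖f (k, l)‖₊ ^ 2 : ℝ≥0∞) else 0) ≤ C)
    (h₂ : ∀ l : ℤ, ∑' k : ℤ, (if (k, l) ∈ S₂ then (‖f (k, l)‖₊ ^ 2 : ℝ≥0∞) else 0) ≤ C) :
    ∃ B : ℝ, ∀ lam : ℝ, 0 < lam →
      {p : ℤ × ℤ | lam < ‖f p‖}.Finite ∧
      lam * (({p : ℤ × ℤ | lam < ‖f p‖}.ncard : ℝ) ^ ((1 : ℝ) / 4)) ≤ B := by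
  classical
  refine ⟨Real.sqrt (6 * C), fun lam hlam => ?_⟩
  set E := {p : ℤ × ℤ | lam < ‖f p‖} with hEdef
  -- pointwise bound: every value satisfies ‖f p‖ ^ 2 ≤ C
  have hC : ∀ p : ℤ × ℤ, ‖f p‖ ^ 2 ≤ (C : ℝ) := by
    rintro ⟨k, l⟩
    have hp : (k, l) ∈ S₁ ∨ (k, l) ∈ S₂ := by
      have := Set.mem_univ (k, l); rw [← hunion] at this; exact this
    have key : (‖f (k, l)‖₊ ^ 2 : ℝ≥0∞) ≤ C := by
      rcases hp with h | h
      · refine le_trans ?_ (h₁ k)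
        refine le_trans ?_ (ENNReal.le_tsum l)
        simp [h]
      · refine le_trans ?_ (h₂ l)
        refine le_trans ?_ (ENNReal.le_tsum k)
        simp [h]
    have := ENNReal.toReal_mono (by simp) key
    simpa using this
  have hCnn : (0:ℝ) ≤ (C : ℝ) := C.coe_nonneg
  -- finiteness
  have hfin : E.Finite := by
    by_contra hinf
    have hball : ∀ m : ℕ, ∀ k l : ℤ, max |k| |l| ≤ (m : ℤ) → lam < ‖f (k, l)‖ := by
      intro m k l hkl
      have hBfin : {p : ℤ × ℤ | max |p.1| |p.2| ≤ (m : ℤ)}.Finite := by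
        apply (Set.finite_Icc ((-(m : ℤ), -(m : ℤ))) ((m : ℤ), (m : ℤ))).subset
        rintro ⟨a, b⟩ hp
        simp only [Set.mem_setOf_eq, max_le_iff, abs_le] at hp
        simp only [Set.mem_Icc, Prod.le_def]
        exact ⟨⟨hp.1.1, hp.2.1⟩, ⟨hp.1.2, hp.2.2⟩⟩
      have hne : (E \ {p : ℤ × ℤ | max |p.1| |p.2| ≤ (m : ℤ)}).Nonempty :=
        ((Set.Infinite.diff hinf hBfin)).nonempty
      obtain ⟨q, hqE, hqB⟩ := hne
      have hq : (m : ℤ) < max |q.1| |q.2| := not_le.mp hqB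
      have hle := hmono q.1 q.2 k l (lt_of_le_of_lt hkl hq)
      exact lt_of_lt_of_le hqE hle
    obtain ⟨m, hm⟩ := exists_nat_gt (2 * (C : ℝ) / lam ^ 2)
    have hkey := key_lemma f S₁ S₂ hdisj hunion C h₁ h₂ lam hlam m (hball m)
    have hpos : (0:ℝ) < lam ^ 2 := by positivity
    rw [div_lt_iff₀ hpos] at hm
    nlinarith
  refine ⟨hfin, ?_⟩
  -- main quantitative bound
  have h36 : lam ^ 4 * (E.ncard : ℝ) ≤ 36 * (C : ℝ) ^ 2 := by
    rcases E.eq_empty_or_nonempty with hE0 | hEne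
    · rw [hE0]; simp
    · obtain ⟨q, hqE, hqmax⟩ := Set.exists_max_image E (fun p => max |p.1| |p.2|) hfin hEne
      obtain ⟨n, hn⟩ : ∃ n : ℕ, (n : ℤ) = max |q.1| |q.2| :=
        ⟨(max |q.1| |q.2|).toNat, Int.toNat_of_nonneg ((abs_nonneg _).trans (le_max_left _ _))⟩
      -- cardinality bound
      have hsub : E ⊆ Set.Icc ((-(n : ℤ), -(n : ℤ))) (((n : ℤ), (n : ℤ))) := by
        rintro ⟨a, b⟩ hp
        have := hqmax (a, b) hp
        rw [← hn] at this
        simp only [max_le_iff, abs_le] at this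
        simp only [Set.mem_Icc, Prod.le_def]
        exact ⟨⟨this.1.1, this.2.1⟩, ⟨this.1.2, this.2.2⟩⟩
      have hcard : (E.ncard : ℝ) ≤ ((2 * n + 1 : ℕ) : ℝ) ^ 2 := by
        have h1 : E.ncard ≤ (Set.Icc ((-(n : ℤ), -(n : ℤ))) (((n : ℤ), (n : ℤ)))).ncard :=
          Set.ncard_le_ncard hsub (Set.finite_Icc _ _)
        have h2 : (Set.Icc ((-(n : ℤ), -(n : ℤ))) (((n : ℤ), (n : ℤ)))).ncard
            = (2 * n + 1) * (2 * n + 1) := by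
          rw [← Finset.coe_Icc, Set.ncard_coe_finset, Finset.Icc_prod_def,
            Finset.card_product]
          simp only [Int.card_Icc]
          have hh : ((n : ℤ) + 1 - -(n : ℤ)).toNat = 2 * n + 1 := by omega
          rw [hh]
        have : (E.ncard : ℝ) ≤ (((2 * n + 1) * (2 * n + 1) : ℕ) : ℝ) := by
          exact_mod_cast h1.trans_eq h2
        calc (E.ncard : ℝ) ≤ (((2 * n + 1) * (2 * n + 1) : ℕ) : ℝ) := this
          _ = ((2 * n + 1 : ℕ) : ℝ) ^ 2 := by push_cast; ring
      rcases Nat.eq_zero_or_pos n with hn0 | hn1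
      · -- single point case
        have hlamC : lam ^ 2 ≤ (C : ℝ) := by
          have h1 : lam ^ 2 < ‖f q‖ ^ 2 := by
            have : lam < ‖f q‖ := hqE
            nlinarith [norm_nonneg (f q)]
          exact (h1.trans_le (hC q)).le
        have hcard1 : (E.ncard : ℝ) ≤ 1 := by
          rw [hn0] at hcard; norm_num at hcard; exact_mod_cast hcard
        nlinarith [mul_le_mul hlamC hlamC (sq_nonneg lam) hCnn, hcard1,
          Nat.cast_nonneg (α := ℝ) E.ncard, sq_nonneg lam, hCnn]
      · -- n ≥ 1 : apply the key lemma with m = n - 1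
        obtain ⟨k, rfl⟩ : ∃ k, n = k + 1 := ⟨n - 1, by omega⟩

        have hE' : ∀ a b : ℤ, max |a| |b| ≤ (k : ℤ) → lam < ‖f (a, b)‖ := by
          intro a b hab
          have hlt : max |a| |b| < max |q.1| |q.2| := by
            rw [← hn]; push_cast; omega
          have hle := hmono q.1 q.2 a b hlt
          exact lt_of_lt_of_le hqE hle
        have hkey := key_lemma f S₁ S₂ hdisj hunion C h₁ h₂ lam hlam k hE'
        -- lam^2 * (2k+1) ≤ 2C, ncard ≤ (2k+3)^2
        have hcard' : (E.ncard : ℝ) ≤ (2 * (k : ℝ) + 3) ^ 2 := by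
          calc (E.ncard : ℝ) ≤ ((2 * (k + 1) + 1 : ℕ) : ℝ) ^ 2 := hcard
            _ = (2 * (k : ℝ) + 3) ^ 2 := by push_cast; ring
        have hkpos : (0:ℝ) ≤ (k : ℝ) := Nat.cast_nonneg k
        have hq1 : lam ^ 4 * (2 * (k : ℝ) + 1) ^ 2 ≤ 4 * (C : ℝ) ^ 2 := by
          nlinarith [mul_le_mul hkey hkey
            (by positivity : (0:ℝ) ≤ lam ^ 2 * (2 * (k : ℝ) + 1))
            (by positivity : (0:ℝ) ≤ 2 * (C : ℝ))]
        have hq2 : (E.ncard : ℝ) ≤ 9 * (2 * (k : ℝ) + 1) ^ 2 := by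
          nlinarith [hcard', hkpos, sq_nonneg (k : ℝ)]
        calc lam ^ 4 * (E.ncard : ℝ)
            ≤ lam ^ 4 * (9 * (2 * (k : ℝ) + 1) ^ 2) :=
              mul_le_mul_of_nonneg_left hq2 (le_of_lt (pow_pos hlam 4))
          _ = 9 * (lam ^ 4 * (2 * (k : ℝ) + 1) ^ 2) := by ring
          _ ≤ 9 * (4 * (C : ℝ) ^ 2) := by linarith
          _ = 36 * (C : ℝ) ^ 2 := by ring
  -- conclude
  set x : ℝ := (E.ncard : ℝ) ^ ((1 : ℝ) / 4) with hxdef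
  have hxnn : 0 ≤ x := Real.rpow_nonneg (Nat.cast_nonneg _) _
  have hx4 : x ^ 4 = (E.ncard : ℝ) := by
    rw [hxdef, ← Real.rpow_natCast ((E.ncard : ℝ) ^ ((1:ℝ)/4)) 4,
      ← Real.rpow_mul (Nat.cast_nonneg _)]
    norm_num
  have hb4 : Real.sqrt (6 * C) ^ 4 = 36 * (C : ℝ) ^ 2 := by
    have h := Real.sq_sqrt (by positivity : (0:ℝ) ≤ 6 * (C : ℝ))
    calc Real.sqrt (6 * C) ^ 4 = (Real.sqrt (6 * C) ^ 2) ^ 2 := by ring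
      _ = (6 * (C : ℝ)) ^ 2 := by rw [h]
      _ = 36 * (C : ℝ) ^ 2 := by ring
  apply le_of_pow_le_pow_left₀ (n := 4) (by norm_num) (Real.sqrt_nonneg _)
  calc (lam * x) ^ 4 = lam ^ 4 * x ^ 4 := by ring
    _ = lam ^ 4 * (E.ncard : ℝ) := by rw [hx4]
    _ ≤ 36 * (C : ℝ) ^ 2 := h36
    _ = Real.sqrt (6 * C) ^ 4 := hb4.symm
end

section
/- If a function f ∈ ℓ^{4,∞}(Z²) satisfies the monotonicity condition |f(k₁,l₁)| ≤ |f(k₂,l₂)| whenever max{|k₁|,|l₁|} > max{|k₂|,|l₂|}, then with S₁ = {(k,l) ∈ Z² : |k| ≥ |l|} and S₂ = {(k,l) ∈ Z² : |k| < |l|}, there is a constant C (depending only on ‖f‖_{ℓ^{4,∞}}) such that ∑_{l : (k,l)∈S₁} |f(k,l)|² ≤ C for all k and ∑_{k : (k,l)∈S₂} |f(k,l)|² ≤ C for all l. -/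
open scoped ENNReal NNReal Classical

/-- for a max-norm radially decreasing `f ∈ ℓ^{4,∞}(ℤ²)`, the explicit
decomposition `S₁ = {|k| ≥ |l|}`, `S₂ = {|k| < |l|}` has uniformly bounded row/column
`ℓ²`-norms. -/
theorem stmt_5 (f : ℤ × ℤ → ℂ) (A : ℝ)
    (hweak : ∀ lam : ℝ, 0 < lam →
      {p : ℤ × ℤ | lam < ‖f p‖}.Finite ∧
      lam * (({p : ℤ × ℤ | lam < ‖f p‖}.ncard : ℝ) ^ ((1 : ℝ) / 4)) ≤ A)
    (hmono : ∀ k₁ l₁ k₂ l₂ : ℤ, max |k₁| |l₁| > max |k₂| |l₂| → ‖f (k₁, l₁)‖ ≤ ‖f (k₂, l₂)‖) :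
    ∃ C : ℝ≥0,
      (∀ k : ℤ, ∑' l : ℤ, (if |k| ≥ |l| then (‖f (k, l)‖₊ ^ 2 : ℝ≥0∞) else 0) ≤ C) ∧
      (∀ l : ℤ, ∑' k : ℤ, (if |k| < |l| then (‖f (k, l)‖₊ ^ 2 : ℝ≥0∞) else 0) ≤ C) := by
  classical
  -- A is nonnegative
  have hA0 : 0 ≤ A := by
    have h := (hweak 1 one_pos).2
    have h0 : 0 ≤ 1 * (({p : ℤ × ℤ | (1:ℝ) < ‖f p‖}.ncard : ℝ) ^ ((1 : ℝ) / 4)) := by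
      positivity
    linarith
  -- every value is bounded by A
  have hbd0 : ∀ p : ℤ × ℤ, ‖f p‖ ≤ A := by
    intro p
    by_contra hcon
    push_neg at hcon
    set lam := (A + ‖f p‖) / 2 with hlam
    have hlam_pos : 0 < lam := by simp only [hlam]; linarith
    have hlam_lt : lam < ‖f p‖ := by simp only [hlam]; linarith
    have hA_lt : A < lam := by simp only [hlam]; linarith
    obtain ⟨hfin, hle⟩ := hweak lam hlam_pos
    have hmem : p ∈ {q : ℤ × ℤ | lam < ‖f q‖} := hlam_lt
    have h1 : 1 ≤ ({q : ℤ × ℤ | lam < ‖f q‖}.ncard : ℝ) := by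
      have := (Set.ncard_pos hfin).mpr ⟨p, hmem⟩
      exact_mod_cast this
    have h14 : (1:ℝ) ≤ ({q : ℤ × ℤ | lam < ‖f q‖}.ncard : ℝ) ^ ((1:ℝ)/4) := by
      have := Real.rpow_le_rpow zero_le_one h1 (by norm_num : (0:ℝ) ≤ 1/4)
      rwa [Real.one_rpow] at this
    have : lam ≤ A := by
      calc lam = lam * 1 := (mul_one lam).symm
        _ ≤ lam * (({q : ℤ × ℤ | lam < ‖f q‖}.ncard : ℝ) ^ ((1:ℝ)/4)) :=
            mul_le_mul_of_nonneg_left h14 hlam_pos.le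
        _ ≤ A := hle
    linarith
  -- key pointwise bound
  have key : ∀ k l : ℤ, 1 ≤ max |k| |l| →
      ‖f (k, l)‖ ^ 2 * (2 * ((max |k| |l| : ℤ) : ℝ) - 1) ≤ A ^ 2 := by
    intro k l hn
    set n : ℤ := max |k| |l| with hn_def
    by_contra hcon
    push_neg at hcon
    set g := ‖f (k, l)‖ with hg
    have hg0 : 0 ≤ g := norm_nonneg _
    have hc0 : (0:ℝ) < 2 * (n:ℝ) - 1 := by
      have : (1:ℝ) ≤ (n:ℝ) := by exact_mod_cast hn
      linarith
    have hgpos : 0 < g := by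
      rcases hg0.lt_or_eq with h | h
      · exact h
      · exfalso
        rw [← h] at hcon
        nlinarith [sq_nonneg A]
    set s := Real.sqrt (A ^ 2 / (2 * (n:ℝ) - 1)) with hs
    have hs0 : 0 ≤ s := Real.sqrt_nonneg _
    have hsq : s ^ 2 = A ^ 2 / (2 * (n:ℝ) - 1) := Real.sq_sqrt (by positivity)
    have hslt : s < g := by
      rw [hs, Real.sqrt_lt' hgpos, div_lt_iff₀ hc0]
      linarith
    set lam := (s + g) / 2 with hlam
    have hlam_pos : 0 < lam := by simp only [hlam]; linarith
    have hslam : s < lam := by simp only [hlam]; linarith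
    have hlamg : lam < g := by simp only [hlam]; linarith
    obtain ⟨hfin, hle⟩ := hweak lam hlam_pos
    -- the box of points with max-norm < n is contained in the superlevel set
    have hsub : ((Finset.Icc (-(n-1)) (n-1) ×ˢ Finset.Icc (-(n-1)) (n-1) : Finset (ℤ × ℤ)) :
        Set (ℤ × ℤ)) ⊆ {p : ℤ × ℤ | lam < ‖f p‖} := by
      rintro ⟨a, b⟩ hab
      simp only [Finset.coe_product, Set.mem_prod, Finset.mem_coe, Finset.mem_Icc] at hab
      have ha : |a| ≤ n - 1 := abs_le.mpr hab.1
      have hb : |b| ≤ n - 1 := abs_le.mpr hab.2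
      have hmax : max |k| |l| > max |a| |b| := by
        rw [← hn_def]
        have := max_le ha hb
        omega
      have := hmono k l a b hmax
      exact lt_of_lt_of_le hlamg this
    have hcard : ((2*n - 1).toNat) ^ 2 ≤ {p : ℤ × ℤ | lam < ‖f p‖}.ncard := by
      have h1 := Set.ncard_le_ncard hsub hfin
      rw [Set.ncard_coe_finset, Finset.card_product, Int.card_Icc] at h1
      have : ((n - 1) + 1 - (-(n - 1))) = 2 * n - 1 := by ring
      rw [this] at h1
      calc ((2*n-1).toNat) ^ 2 = (2*n-1).toNat * (2*n-1).toNat := sq _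
        _ ≤ _ := h1
    have hcardR : (2 * (n:ℝ) - 1) ^ 2 ≤ ({p : ℤ × ℤ | lam < ‖f p‖}.ncard : ℝ) := by
      have h2 : (((2*n-1).toNat : ℤ) : ℝ) = 2 * (n:ℝ) - 1 := by
        rw [Int.toNat_of_nonneg (by omega)]
        push_cast
        ring
      have h3 : (((2*n-1).toNat ^ 2 : ℕ) : ℝ) ≤ ({p : ℤ × ℤ | lam < ‖f p‖}.ncard : ℝ) := by
        exact_mod_cast hcard
      rw [← h2]
      push_cast at h3 ⊢
      linarith
    have h14 : Real.sqrt (2 * (n:ℝ) - 1) ≤ ({p : ℤ × ℤ | lam < ‖f p‖}.ncard : ℝ) ^ ((1:ℝ)/4) := by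
      have heq : ((2 * (n:ℝ) - 1) ^ 2) ^ ((1:ℝ)/4) = Real.sqrt (2 * (n:ℝ) - 1) := by
        rw [← Real.rpow_natCast (2 * (n:ℝ) - 1) 2, ← Real.rpow_mul hc0.le]
        rw [Real.sqrt_eq_rpow]
        norm_num
      rw [← heq]
      exact Real.rpow_le_rpow (by positivity) hcardR (by norm_num)
    have hfinal : A < lam * Real.sqrt (2 * (n:ℝ) - 1) := by
      have hpos : 0 ≤ lam * Real.sqrt (2 * (n:ℝ) - 1) := by positivity
      refine lt_of_pow_lt_pow_left₀ 2 hpos ?_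
      have hsq2 : (Real.sqrt (2 * (n:ℝ) - 1)) ^ 2 = 2 * (n:ℝ) - 1 := Real.sq_sqrt hc0.le
      have hl2 : s ^ 2 < lam ^ 2 := by nlinarith
      calc A ^ 2 = s ^ 2 * (2 * (n:ℝ) - 1) := by
            rw [hsq]; field_simp
        _ < lam ^ 2 * (2 * (n:ℝ) - 1) := by nlinarith
        _ = (lam * Real.sqrt (2 * (n:ℝ) - 1)) ^ 2 := by rw [mul_pow, hsq2]
    have : lam * Real.sqrt (2 * (n:ℝ) - 1) ≤ A := by
      calc lam * Real.sqrt (2 * (n:ℝ) - 1)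
          ≤ lam * (({p : ℤ × ℤ | lam < ‖f p‖}.ncard : ℝ) ^ ((1:ℝ)/4)) :=
            mul_le_mul_of_nonneg_left h14 hlam_pos.le
        _ ≤ A := hle
    linarith
  -- derived pointwise bound in division form
  have hpt : ∀ k l : ℤ, 1 ≤ max |k| |l| →
      ‖f (k, l)‖ ^ 2 ≤ A ^ 2 / (2 * ((max |k| |l| : ℤ) : ℝ) - 1) := by
    intro k l h
    have hc : (0:ℝ) < 2 * ((max |k| |l| : ℤ) : ℝ) - 1 := by
      have : (1:ℝ) ≤ ((max |k| |l| : ℤ) : ℝ) := by exact_mod_cast h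
      linarith
    rw [le_div_iff₀ hc]
    exact key k l h
  refine ⟨(3 * A ^ 2).toNNReal, ?_, ?_⟩
  · -- rows
    intro k
    set n : ℤ := |k| with hn
    have hn0 : 0 ≤ n := abs_nonneg k
    have hsupp : ∀ l ∉ Finset.Icc (-n) n,
        (if |k| ≥ |l| then (‖f (k, l)‖₊ ^ 2 : ℝ≥0∞) else 0) = 0 := by
      intro l hl
      rw [if_neg]
      intro hcon
      exact hl (Finset.mem_Icc.mpr (abs_le.mp hcon))
    rw [tsum_eq_sum hsupp]
    have hconv : ∑ l ∈ Finset.Icc (-n) n, (if |k| ≥ |l| then (‖f (k, l)‖₊ ^ 2 : ℝ≥0∞) else 0)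
        = ENNReal.ofReal (∑ l ∈ Finset.Icc (-n) n, if |k| ≥ |l| then ‖f (k, l)‖ ^ 2 else 0) := by
      rw [ENNReal.ofReal_sum_of_nonneg (fun l _ => by split_ifs <;> positivity)]
      refine Finset.sum_congr rfl fun l _ => ?_
      split_ifs
      · rw [ENNReal.ofReal_pow (norm_nonneg _), ofReal_norm, enorm_eq_nnnorm]
      · simp
    rw [hconv]
    have hsum : ∑ l ∈ Finset.Icc (-n) n, (if |k| ≥ |l| then ‖f (k, l)‖ ^ 2 else 0) ≤ 3 * A ^ 2 := by
      rcases eq_or_lt_of_le hn0 with h0 | h1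
      · -- n = 0, so k = 0 and the only term is l = 0
        have hk : k = 0 := abs_eq_zero.mp (by rw [← hn]; omega)
        subst hk
        simp only [← h0]
        rw [show Finset.Icc (-(0:ℤ)) 0 = {0} by rfl]
        rw [Finset.sum_singleton, if_pos (by simp)]
        have h2 := hbd0 (0, 0)
        have h3 : (0:ℝ) ≤ ‖f (0, 0)‖ := norm_nonneg _
        nlinarith
      · have h1' : (1:ℤ) ≤ n := h1
        have hc : (0:ℝ) < 2 * (n:ℝ) - 1 := by
          have : (1:ℝ) ≤ (n:ℝ) := by exact_mod_cast h1'
          linarith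
        have hb : ∀ l ∈ Finset.Icc (-n) n,
            (if |k| ≥ |l| then ‖f (k, l)‖ ^ 2 else 0) ≤ A ^ 2 / (2 * (n:ℝ) - 1) := by
          intro l _
          split_ifs with h
          · have hmax : max |k| |l| = n := by rw [hn]; exact max_eq_left h
            have := hpt k l (by omega)
            rwa [hmax] at this
          · positivity
        calc ∑ l ∈ Finset.Icc (-n) n, (if |k| ≥ |l| then ‖f (k, l)‖ ^ 2 else 0)
            ≤ (Finset.Icc (-n) n).card • (A ^ 2 / (2 * (n:ℝ) - 1)) :=
              Finset.sum_le_card_nsmul _ _ _ hb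
          _ = ((Finset.Icc (-n) n).card : ℝ) * (A ^ 2 / (2 * (n:ℝ) - 1)) := by
              rw [nsmul_eq_mul]
          _ ≤ 3 * A ^ 2 := by
              rw [Int.card_Icc]
              have hcast : (((n + 1 - -n).toNat : ℕ) : ℝ) = 2 * (n:ℝ) + 1 := by
                rw [show ((n + 1 - -n).toNat : ℕ) = ((n + 1 - -n).toNat : ℕ) from rfl]
                have : (((n + 1 - -n).toNat : ℤ) : ℝ) = ((n + 1 - -n : ℤ) : ℝ) := by
                  rw [Int.toNat_of_nonneg (by omega)]
                push_cast at this ⊢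
                linarith
              rw [hcast, mul_div_assoc']
              rw [div_le_iff₀ hc]
              have hn1 : (1:ℝ) ≤ (n:ℝ) := by exact_mod_cast h1'
              nlinarith [sq_nonneg A, mul_nonneg (sq_nonneg A) (by linarith : (0:ℝ) ≤ (n:ℝ) - 1)]
    exact ENNReal.ofReal_le_ofReal hsum
  · -- columns
    intro l
    set m : ℤ := |l| with hm
    have hm0 : 0 ≤ m := abs_nonneg l
    rcases eq_or_lt_of_le hm0 with h0 | h1
    · -- l = 0 : empty sum
      have hz : ∀ k : ℤ, (if |k| < |l| then (‖f (k, l)‖₊ ^ 2 : ℝ≥0∞) else 0) = 0 := by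
        intro k
        rw [if_neg]
        intro hcon
        rw [hm] at h0
        have h4 := abs_nonneg k
        omega
      rw [tsum_congr hz, tsum_zero]
      exact zero_le
    · have h1' : (1:ℤ) ≤ m := h1
      have hc : (0:ℝ) < 2 * (m:ℝ) - 1 := by
        have : (1:ℝ) ≤ (m:ℝ) := by exact_mod_cast h1'
        linarith
      have hsupp : ∀ k ∉ Finset.Icc (-(m-1)) (m-1),
          (if |k| < |l| then (‖f (k, l)‖₊ ^ 2 : ℝ≥0∞) else 0) = 0 := by
        intro k hk
        rw [if_neg]
        intro hcon
        refine hk (Finset.mem_Icc.mpr ?_)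
        have : |k| ≤ m - 1 := by omega
        exact abs_le.mp this
      rw [tsum_eq_sum hsupp]
      have hconv : ∑ k ∈ Finset.Icc (-(m-1)) (m-1),
            (if |k| < |l| then (‖f (k, l)‖₊ ^ 2 : ℝ≥0∞) else 0)
          = ENNReal.ofReal (∑ k ∈ Finset.Icc (-(m-1)) (m-1),
            if |k| < |l| then ‖f (k, l)‖ ^ 2 else 0) := by
        rw [ENNReal.ofReal_sum_of_nonneg (fun k _ => by split_ifs <;> positivity)]
        refine Finset.sum_congr rfl fun k _ => ?_
        split_ifs
        · rw [ENNReal.ofReal_pow (norm_nonneg _), ofReal_norm, enorm_eq_nnnorm]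
        · simp
      rw [hconv]
      have hsum : ∑ k ∈ Finset.Icc (-(m-1)) (m-1),
          (if |k| < |l| then ‖f (k, l)‖ ^ 2 else 0) ≤ 3 * A ^ 2 := by
        have hb : ∀ k ∈ Finset.Icc (-(m-1)) (m-1),
            (if |k| < |l| then ‖f (k, l)‖ ^ 2 else 0) ≤ A ^ 2 / (2 * (m:ℝ) - 1) := by
          intro k _
          split_ifs with h
          · have hmax : max |k| |l| = m := by rw [hm]; exact max_eq_right h.le
            have := hpt k l (by omega)
            rwa [hmax] at this
          · positivity
        calc ∑ k ∈ Finset.Icc (-(m-1)) (m-1), (if |k| < |l| then ‖f (k, l)‖ ^ 2 else 0)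
            ≤ (Finset.Icc (-(m-1)) (m-1)).card • (A ^ 2 / (2 * (m:ℝ) - 1)) :=
              Finset.sum_le_card_nsmul _ _ _ hb
          _ = ((Finset.Icc (-(m-1)) (m-1)).card : ℝ) * (A ^ 2 / (2 * (m:ℝ) - 1)) := by
              rw [nsmul_eq_mul]
          _ ≤ 3 * A ^ 2 := by
              rw [Int.card_Icc]
              have hcast : ((((m-1) + 1 - -(m-1)).toNat : ℕ) : ℝ) = 2 * (m:ℝ) - 1 := by
                have : ((((m-1) + 1 - -(m-1)).toNat : ℤ) : ℝ) = (((m-1) + 1 - -(m-1) : ℤ) : ℝ) := by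
                  rw [Int.toNat_of_nonneg (by omega)]
                push_cast at this ⊢
                linarith
              rw [hcast, mul_div_assoc']
              rw [mul_comm, mul_div_assoc, div_self hc.ne', mul_one]
              nlinarith [sq_nonneg A]
      exact ENNReal.ofReal_le_ofReal hsum
end

section
/- Fix n ≥ 1, and for even N ∈ ℕ define F_N : (0,∞) → [0,∞) by F_N(λ) = 2^{2nN²−nN} if λ < 2^{−nN²/2} and F_N(λ) = 0 otherwise. Then for every α > 0 there is a constant C(α,n) such that ∑_{N even} F_N(λ) ≤ C(α,n) λ^{−4} log^{−α}(e/λ) for all λ ∈ (0,1). -/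
open scoped Classical

lemma poly_le_exp_aux {β c : ℝ} (hβ : 0 < β) (hc : 0 < c) {s : ℝ} (hs : 0 ≤ s) :
    (1 + s) ^ β ≤ Real.exp (c + β * Real.log (β / c)) * Real.exp (c * s) := by
  have h1s : (0:ℝ) < 1 + s := by linarith
  rw [Real.rpow_def_of_pos h1s, ← Real.exp_add]
  apply Real.exp_le_exp.mpr
  have hcb : (0:ℝ) < c / β := div_pos hc hβ
  have h1 : Real.log ((1 + s) * (c / β)) ≤ (1 + s) * (c / β) - 1 :=
    Real.log_le_sub_one_of_pos (by positivity)
  rw [Real.log_mul h1s.ne' hcb.ne'] at h1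
  have h3 : Real.log (c / β) = - Real.log (β / c) := by
    rw [← Real.log_inv, inv_div]
  rw [h3] at h1
  have h4 : Real.log (1 + s) ≤ (1 + s) * (c / β) - 1 + Real.log (β / c) := by linarith
  have h5 : β * ((1 + s) * (c / β)) = c * (1 + s) := by field_simp
  nlinarith [mul_le_mul_of_nonneg_left h4 hβ.le]

set_option maxHeartbeats 1000000 in
/-- with `F_N(λ) = 2^{2nN²−nN}` for `λ < 2^{−nN²/2}` (and `0` otherwise),
for every `α > 0` one has `∑_{N even} F_N(λ) ≤ C(α,n) λ^{−4} log^{−α}(e/λ)` on `(0,1)`. -/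
theorem stmt_15 (n : ℕ) (hn : 1 ≤ n) (α : ℝ) (hα : 0 < α) :
    ∃ C : ℝ, ∀ lam ∈ Set.Ioo (0 : ℝ) 1,
      (∑' N : ℕ, (if Even N ∧ lam < (2 : ℝ) ^ (-((n : ℝ) * (N : ℝ) ^ 2) / 2)
          then (2 : ℝ) ^ (2 * (n : ℝ) * (N : ℝ) ^ 2 - (n : ℝ) * (N : ℝ)) else 0)) ≤
        C * lam ^ (-4 : ℝ) * (Real.log (Real.exp 1 / lam)) ^ (-α) := by
  have hlog2 : (0:ℝ) < Real.log 2 := Real.log_pos one_lt_two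
  have hn1 : (1:ℝ) ≤ (n:ℝ) := by exact_mod_cast hn
  set C₁ : ℝ := Real.exp (4 + α * Real.log (α / 4)) with hC₁
  set C₂ : ℝ := Real.exp (Real.log 2 / 2 + 2 * α * Real.log (2 * α / (Real.log 2 / 2))) with hC₂
  set r : ℝ := Real.exp (-(Real.log 2 / 2)) with hr
  have hr0 : (0:ℝ) ≤ r := (Real.exp_pos _).le
  have hr1 : r < 1 := by
    rw [hr, Real.exp_lt_one_iff]; linarith
  refine ⟨C₁ * (n:ℝ) ^ α * C₂ * (1 - r)⁻¹, ?_⟩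
  rintro lam ⟨hl0, hl1⟩
  have hloglam : Real.log lam < 0 := Real.log_neg hl0 hl1
  set l : ℝ := -Real.log lam with hldef
  have hl : 0 < l := by rw [hldef]; linarith
  have h1l : (0:ℝ) < 1 + l := by linarith
  have hL : Real.log (Real.exp 1 / lam) = 1 + l := by
    rw [Real.log_div (Real.exp_ne_zero 1) hl0.ne', Real.log_exp, hldef]; ring
  rw [hL]
  have hlam4 : lam ^ (-4:ℝ) = Real.exp (4 * l) := by
    rw [Real.rpow_def_of_pos hl0]; congr 1; rw [hldef]; ring
  set B : ℝ := C₁ * (n:ℝ) ^ α * C₂ * lam ^ (-4:ℝ) * (1 + l) ^ (-α) with hB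
  have hB0 : (0:ℝ) ≤ B := by
    refine mul_nonneg (mul_nonneg (mul_nonneg (mul_nonneg (Real.exp_pos _).le ?_)
      (Real.exp_pos _).le) (Real.rpow_nonneg hl0.le _)) (Real.rpow_nonneg h1l.le _)
    exact Real.rpow_nonneg (Nat.cast_nonneg n) _
  have h1lα : (0:ℝ) < (1 + l) ^ α := Real.rpow_pos_of_pos h1l α
  have key : ∀ N : ℕ, (if Even N ∧ lam < (2 : ℝ) ^ (-((n : ℝ) * (N : ℝ) ^ 2) / 2)
      then (2 : ℝ) ^ (2 * (n : ℝ) * (N : ℝ) ^ 2 - (n : ℝ) * (N : ℝ)) else 0) ≤ B * r ^ N := by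
    intro N
    split_ifs with h
    · obtain ⟨-, hadm⟩ := h
      set t : ℝ := (n:ℝ) * (N:ℝ) ^ 2 / 2 * Real.log 2 with htdef
      have ht0 : 0 ≤ t := by
        refine mul_nonneg (by positivity) hlog2.le
      have htl : t < l := by
        have h' := Real.log_lt_log hl0 hadm
        rw [Real.log_rpow two_pos] at h'
        rw [htdef, hldef]; linarith [h']
      set s : ℝ := l - t with hsdef
      have hs0 : 0 ≤ s := by rw [hsdef]; linarith
      have hA1 : (1 + l) ^ α ≤ (1 + t) ^ α * (1 + s) ^ α := by
        rw [← Real.mul_rpow (by linarith) (by linarith)]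
        apply Real.rpow_le_rpow h1l.le ?_ hα.le
        nlinarith [mul_nonneg ht0 hs0]
      have hA2 : (1 + s) ^ α ≤ C₁ * Real.exp (4 * s) := by
        rw [hC₁]; exact poly_le_exp_aux hα (by norm_num) hs0
      have hN2 : (1 + t) ^ α ≤ (n:ℝ) ^ α * C₂ * Real.exp (Real.log 2 / 2 * (N:ℝ)) := by
        have hlog2le1 : Real.log 2 ≤ 1 := by
          have := Real.log_le_sub_one_of_pos (by norm_num : (0:ℝ) < 2); linarith
        have hb1 : 1 + t ≤ (n:ℝ) * (1 + (N:ℝ)) ^ 2 := by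
          rw [htdef]
          have hx : (0:ℝ) ≤ (n:ℝ) * (N:ℝ) ^ 2 / 2 := by positivity
          have hy : (0:ℝ) ≤ (n:ℝ) * (N:ℝ) := by positivity
          have hz := mul_le_mul_of_nonneg_left hlog2le1 hx
          have hexp : (n:ℝ) * (1 + (N:ℝ)) ^ 2 = (n:ℝ) + 2 * ((n:ℝ) * (N:ℝ)) + (n:ℝ) * (N:ℝ) ^ 2 := by
            ring
          linarith [hz, hexp, hy, hn1]
        have hb2 : (1 + t) ^ α ≤ ((n:ℝ) * (1 + (N:ℝ)) ^ 2) ^ α :=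
          Real.rpow_le_rpow (by linarith) hb1 hα.le
        have hb3 : ((n:ℝ) * (1 + (N:ℝ)) ^ 2) ^ α = (n:ℝ) ^ α * ((1 + (N:ℝ)) ^ 2) ^ α :=
          Real.mul_rpow (Nat.cast_nonneg n) (by positivity)
        have hb4 : (((1 + (N:ℝ)) ^ 2 : ℝ)) ^ α = (1 + (N:ℝ)) ^ (2 * α) := by
          rw [← Real.rpow_natCast (1 + (N:ℝ)) 2, ← Real.rpow_mul (by positivity)]
          norm_num
        have hb5 : (1 + (N:ℝ)) ^ (2 * α) ≤ C₂ * Real.exp (Real.log 2 / 2 * (N:ℝ)) := by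
          rw [hC₂]
          exact poly_le_exp_aux (by linarith) (by linarith) (Nat.cast_nonneg N)
        calc (1 + t) ^ α ≤ (n:ℝ) ^ α * ((1 + (N:ℝ)) ^ 2) ^ α := by rw [← hb3]; exact hb2
          _ = (n:ℝ) ^ α * (1 + (N:ℝ)) ^ (2 * α) := by rw [hb4]
          _ ≤ (n:ℝ) ^ α * (C₂ * Real.exp (Real.log 2 / 2 * (N:ℝ))) := by
              exact mul_le_mul_of_nonneg_left hb5 (Real.rpow_nonneg (Nat.cast_nonneg n) _)
          _ = (n:ℝ) ^ α * C₂ * Real.exp (Real.log 2 / 2 * (N:ℝ)) := by ring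
      have hpow : (2:ℝ) ^ (2 * (n:ℝ) * (N:ℝ) ^ 2 - (n:ℝ) * (N:ℝ)) =
          Real.exp ((2 * (n:ℝ) * (N:ℝ) ^ 2 - (n:ℝ) * (N:ℝ)) * Real.log 2) := by
        rw [Real.rpow_def_of_pos (by norm_num : (0:ℝ) < 2)]; congr 1; ring
      have hrN : r ^ N = Real.exp (-(Real.log 2 / 2) * (N:ℝ)) := by
        rw [hr, ← Real.exp_nat_mul]; congr 1; ring
      have hinv : (1 + l) ^ (-α) = ((1 + l) ^ α)⁻¹ := Real.rpow_neg h1l.le α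
      have main : Real.exp ((2 * (n:ℝ) * (N:ℝ) ^ 2 - (n:ℝ) * (N:ℝ)) * Real.log 2) * (1 + l) ^ α ≤
          C₁ * (n:ℝ) ^ α * C₂ * Real.exp (4 * l) * Real.exp (-(Real.log 2 / 2) * (N:ℝ)) := by
        have step1 : Real.exp ((2 * (n:ℝ) * (N:ℝ) ^ 2 - (n:ℝ) * (N:ℝ)) * Real.log 2) * (1 + l) ^ α ≤
            Real.exp ((2 * (n:ℝ) * (N:ℝ) ^ 2 - (n:ℝ) * (N:ℝ)) * Real.log 2) *
              (((n:ℝ) ^ α * C₂ * Real.exp (Real.log 2 / 2 * (N:ℝ))) * (C₁ * Real.exp (4 * s))) := by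
          apply mul_le_mul_of_nonneg_left _ (Real.exp_pos _).le
          calc (1 + l) ^ α ≤ (1 + t) ^ α * (1 + s) ^ α := hA1
            _ ≤ ((n:ℝ) ^ α * C₂ * Real.exp (Real.log 2 / 2 * (N:ℝ))) * (C₁ * Real.exp (4 * s)) := by
                apply mul_le_mul hN2 hA2 (Real.rpow_nonneg (by linarith) _)
                positivity
        have step2 : Real.exp ((2 * (n:ℝ) * (N:ℝ) ^ 2 - (n:ℝ) * (N:ℝ)) * Real.log 2) *
              (((n:ℝ) ^ α * C₂ * Real.exp (Real.log 2 / 2 * (N:ℝ))) * (C₁ * Real.exp (4 * s))) =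
            C₁ * (n:ℝ) ^ α * C₂ *
              (Real.exp ((2 * (n:ℝ) * (N:ℝ) ^ 2 - (n:ℝ) * (N:ℝ)) * Real.log 2) *
                Real.exp (Real.log 2 / 2 * (N:ℝ)) * Real.exp (4 * s)) := by ring
        have step3 : Real.exp ((2 * (n:ℝ) * (N:ℝ) ^ 2 - (n:ℝ) * (N:ℝ)) * Real.log 2) *
              Real.exp (Real.log 2 / 2 * (N:ℝ)) * Real.exp (4 * s) ≤
            Real.exp (4 * l) * Real.exp (-(Real.log 2 / 2) * (N:ℝ)) := by
          rw [← Real.exp_add, ← Real.exp_add, ← Real.exp_add]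
          apply Real.exp_le_exp.mpr
          rw [hsdef, htdef]
          linarith [mul_nonneg (mul_nonneg (sub_nonneg.mpr hn1) (Nat.cast_nonneg (α := ℝ) N)) hlog2.le]
        have hC : (0:ℝ) ≤ C₁ * (n:ℝ) ^ α * C₂ := by
          refine mul_nonneg (mul_nonneg (Real.exp_pos _).le ?_) (Real.exp_pos _).le
          exact Real.rpow_nonneg (Nat.cast_nonneg n) _
        calc _ ≤ _ := step1
          _ = _ := step2
          _ ≤ C₁ * (n:ℝ) ^ α * C₂ * (Real.exp (4 * l) * Real.exp (-(Real.log 2 / 2) * (N:ℝ))) :=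
              mul_le_mul_of_nonneg_left step3 hC
          _ = _ := by ring
      rw [hpow, hB, hlam4, hrN, hinv]
      have main' := (le_div_iff₀ h1lα).mpr main
      calc Real.exp ((2 * (n:ℝ) * (N:ℝ) ^ 2 - (n:ℝ) * (N:ℝ)) * Real.log 2) ≤
            C₁ * (n:ℝ) ^ α * C₂ * Real.exp (4 * l) * Real.exp (-(Real.log 2 / 2) * (N:ℝ)) /
              (1 + l) ^ α := main'
        _ = C₁ * (n:ℝ) ^ α * C₂ * Real.exp (4 * l) * ((1 + l) ^ α)⁻¹ *
              Real.exp (-(Real.log 2 / 2) * (N:ℝ)) := by ring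
    · exact mul_nonneg hB0 (pow_nonneg hr0 N)
  have hsummg : Summable (fun N : ℕ => B * r ^ N) :=
    (summable_geometric_of_lt_one hr0 hr1).mul_left B
  have hf_nonneg : ∀ N : ℕ, (0:ℝ) ≤ (if Even N ∧ lam < (2 : ℝ) ^ (-((n : ℝ) * (N : ℝ) ^ 2) / 2)
      then (2 : ℝ) ^ (2 * (n : ℝ) * (N : ℝ) ^ 2 - (n : ℝ) * (N : ℝ)) else 0) := by
    intro N; split_ifs
    · exact Real.rpow_nonneg (by norm_num) _
    · exact le_rfl
  have hsumf : Summable (fun N : ℕ => (if Even N ∧ lam < (2 : ℝ) ^ (-((n : ℝ) * (N : ℝ) ^ 2) / 2)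
      then (2 : ℝ) ^ (2 * (n : ℝ) * (N : ℝ) ^ 2 - (n : ℝ) * (N : ℝ)) else 0)) :=
    Summable.of_nonneg_of_le hf_nonneg key hsummg
  calc (∑' N : ℕ, (if Even N ∧ lam < (2 : ℝ) ^ (-((n : ℝ) * (N : ℝ) ^ 2) / 2)
          then (2 : ℝ) ^ (2 * (n : ℝ) * (N : ℝ) ^ 2 - (n : ℝ) * (N : ℝ)) else 0)) ≤
      ∑' N : ℕ, B * r ^ N := Summable.tsum_le_tsum key hsumf hsummg
    _ = B * (1 - r)⁻¹ := by rw [tsum_mul_left, tsum_geometric_of_lt_one hr0 hr1]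
    _ = C₁ * (n:ℝ) ^ α * C₂ * (1 - r)⁻¹ * lam ^ (-4:ℝ) * (1 + l) ^ (-α) := by rw [hB]; ring
end
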